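/- Fix m̄ > 0. Let (L_n, m_n) be sequences of positive integers with L_n → ∞ and m_n/L_n → m̄. For each n, let X_{n,1},…,X_{n,m_n} be i.i.d. random variables, each distributed as (1/L_n) times a sum of L_n i.i.d. Exp(1) random variables. Then for every ε ∈ (0,1), Pr(min_{1≤i≤m_n} X_{n,i} ≤ 1-ε) → 0 as n → ∞. -/

import Mathlib

set_option maxHeartbeats 1000000


open MeasureTheory ProbabilityTheory Filter

open scoped ENNReal

instance : IsProbabilityMeasure (expMeasure 1) :=
  isProbabilityMeasure_expMeasure one_pos

lemma my_lintegral_pi_pow (μ : Measure ℝ) [SigmaFinite μ] (f : ℝ → ℝ≥0∞)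
    (hf : Measurable f) (k : ℕ) :
    ∫⁻ y : Fin k → ℝ, ∏ i, f (y i) ∂(Measure.pi fun _ => μ) = (∫⁻ x, f x ∂μ) ^ k := by
  induction k with
  | zero => simp [lintegral_const, Measure.pi_univ]
  | succ k ih =>
    have h := measurePreserving_piFinSuccAbove (fun _ : Fin (k + 1) => μ) 0
    have hprodmeas : Measurable fun y : Fin k → ℝ => ∏ i, f (y i) :=
      Finset.measurable_prod _ fun i _ => hf.comp (measurable_pi_apply i)
    have hF : Measurable fun z : ℝ × (Fin k → ℝ) => f z.1 * ∏ i, f (z.2 i) :=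
      (hf.comp measurable_fst).mul (hprodmeas.comp measurable_snd)
    calc ∫⁻ y : Fin (k + 1) → ℝ, ∏ i, f (y i) ∂(Measure.pi fun _ => μ)
        = ∫⁻ z : ℝ × (Fin k → ℝ), f z.1 * ∏ i, f (z.2 i)
            ∂((μ : Measure ℝ).prod (Measure.pi fun _ => μ)) := by
          rw [← h.lintegral_comp hF]
          refine lintegral_congr fun y => ?_
          simp [MeasurableEquiv.piFinSuccAbove_apply, Fin.prod_univ_succ, Fin.zero_succAbove, Fin.tail]
      _ = (∫⁻ x, f x ∂μ) * ∫⁻ y : Fin k → ℝ, ∏ i, f (y i) ∂(Measure.pi fun _ => μ) :=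
          lintegral_prod_mul hf.aemeasurable hprodmeas.aemeasurable
      _ = (∫⁻ x, f x ∂μ) ^ (k + 1) := by rw [ih]; ring

lemma my_lintegral_exp (t : ℝ) (ht : 0 < t) :
    ∫⁻ x, ENNReal.ofReal (Real.exp (-(t * x))) ∂(expMeasure 1)
      = ENNReal.ofReal (1 / (1 + t)) := by
  have h1t : (0 : ℝ) < 1 + t := by linarith
  have hmeas : Measurable fun x : ℝ => ENNReal.ofReal (Real.exp (-(t * x))) :=
    (Real.measurable_exp.comp ((measurable_id.const_mul t).neg)).ennreal_ofReal
  have hexp : expMeasure 1 = volume.withDensity (exponentialPDF 1) := rfl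
  have hpdfmeas : ∀ r : ℝ, Measurable (exponentialPDF r) := fun r =>
    (measurable_exponentialPDFReal r).ennreal_ofReal
  rw [hexp, lintegral_withDensity_eq_lintegral_mul _ (hpdfmeas 1) hmeas]
  have key : ∀ x : ℝ, (exponentialPDF 1 * fun x => ENNReal.ofReal (Real.exp (-(t * x)))) x
      = ENNReal.ofReal (1 / (1 + t)) * exponentialPDF (1 + t) x := by
    intro x
    simp only [Pi.mul_apply]
    rcases le_or_gt 0 x with hx | hx
    · rw [exponentialPDF_of_nonneg hx, exponentialPDF_of_nonneg hx,
        ← ENNReal.ofReal_mul (by positivity), ← ENNReal.ofReal_mul (by positivity)]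
      congr 1
      rw [one_mul, ← Real.exp_add]
      rw [show -(1 * x) + -(t * x) = -((1 + t) * x) by ring]
      field_simp
    · rw [exponentialPDF_of_neg hx, exponentialPDF_of_neg hx, zero_mul, mul_zero]
  simp_rw [key]
  rw [lintegral_const_mul _ (hpdfmeas (1 + t)), lintegral_exponentialPDF_eq_one h1t, mul_one]

lemma my_chernoff (ε : ℝ) (hε0 : 0 < ε) (hε1 : ε < 1) (k : ℕ) (hk : 0 < k) :
    (Measure.pi fun _ : Fin k => expMeasure 1) {y | (∑ l, y l) / (k : ℝ) ≤ 1 - ε}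
      ≤ ENNReal.ofReal (((1 - ε) * Real.exp ε) ^ k) := by
  have h1ε : (0 : ℝ) < 1 - ε := by linarith
  set t : ℝ := ε / (1 - ε) with ht_def
  have ht : 0 < t := div_pos hε0 h1ε
  have htε : t * (1 - ε) = ε := by rw [ht_def]; field_simp
  have h1t : 1 + t = 1 / (1 - ε) := by rw [ht_def]; field_simp; ring
  have hsummeas : Measurable fun y : Fin k → ℝ => ∑ l, y l :=
    Finset.measurable_sum _ fun l _ => measurable_pi_apply l
  have hfmeas : Measurable fun y : Fin k → ℝ =>
      ENNReal.ofReal (Real.exp (-(t * ∑ l, y l))) :=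
    (Real.measurable_exp.comp (hsummeas.const_mul t).neg).ennreal_ofReal
  have hsub : {y : Fin k → ℝ | (∑ l, y l) / (k : ℝ) ≤ 1 - ε}
      ⊆ {y | ENNReal.ofReal (Real.exp (-(ε * k)))
          ≤ ENNReal.ofReal (Real.exp (-(t * ∑ l, y l)))} := by
    intro y hy
    have hk' : (0 : ℝ) < k := Nat.cast_pos.mpr hk
    have hsum : ∑ l, y l ≤ (1 - ε) * k := by
      simp only [Set.mem_setOf_eq] at hy
      rw [div_le_iff₀ hk'] at hy; exact hy
    have harg : -(ε * k) ≤ -(t * ∑ l, y l) := by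
      have h2 : t * (∑ l, y l) ≤ t * ((1 - ε) * k) :=
        mul_le_mul_of_nonneg_left hsum ht.le
      nlinarith
    exact ENNReal.ofReal_le_ofReal (Real.exp_le_exp.mpr harg)
  have markov := mul_meas_ge_le_lintegral₀
    (μ := Measure.pi fun _ : Fin k => expMeasure 1)
    hfmeas.aemeasurable (ENNReal.ofReal (Real.exp (-(ε * k))))
  have hprod : ∀ y : Fin k → ℝ, ENNReal.ofReal (Real.exp (-(t * ∑ l, y l)))
      = ∏ l, ENNReal.ofReal (Real.exp (-(t * y l))) := by
    intro y
    rw [← ENNReal.ofReal_prod_of_nonneg (fun _ _ => (Real.exp_pos _).le),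
      ← Real.exp_sum]
    congr 2
    simp [Finset.mul_sum]
  have hint : ∫⁻ y, ENNReal.ofReal (Real.exp (-(t * ∑ l, y l)))
        ∂(Measure.pi fun _ : Fin k => expMeasure 1)
      = ENNReal.ofReal (1 - ε) ^ k := by
    simp only [hprod]
    rw [my_lintegral_pi_pow _ (fun x => ENNReal.ofReal (Real.exp (-(t * x))))
        ((Real.measurable_exp.comp ((measurable_id.const_mul t).neg)).ennreal_ofReal) k,
      my_lintegral_exp t ht, h1t, one_div_one_div]
  have hcT : ENNReal.ofReal (Real.exp (-(ε * k)))
        * ENNReal.ofReal (((1 - ε) * Real.exp ε) ^ k)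
      = ENNReal.ofReal (1 - ε) ^ k := by
    rw [← ENNReal.ofReal_mul (Real.exp_pos _).le, ← ENNReal.ofReal_pow h1ε.le]
    congr 1
    rw [mul_pow, ← Real.exp_nat_mul,
      show Real.exp (-(ε * k)) * ((1 - ε) ^ k * Real.exp (k * ε))
        = (1 - ε) ^ k * (Real.exp (-(ε * k)) * Real.exp (k * ε)) by ring,
      ← Real.exp_add]
    ring_nf
    simp
  have hc0 : ENNReal.ofReal (Real.exp (-(ε * k))) ≠ 0 :=
    (ENNReal.ofReal_pos.mpr (Real.exp_pos _)).ne'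
  have hct : ENNReal.ofReal (Real.exp (-(ε * k))) ≠ ⊤ := ENNReal.ofReal_ne_top
  calc (Measure.pi fun _ : Fin k => expMeasure 1) {y | (∑ l, y l) / (k : ℝ) ≤ 1 - ε}
      ≤ (Measure.pi fun _ : Fin k => expMeasure 1)
          {y | ENNReal.ofReal (Real.exp (-(ε * k)))
            ≤ ENNReal.ofReal (Real.exp (-(t * ∑ l, y l)))} := measure_mono hsub
    _ ≤ ENNReal.ofReal (((1 - ε) * Real.exp ε) ^ k) := by
        refine (ENNReal.mul_le_mul_iff_right hc0 hct).mp ?_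
        rw [hcT, ← hint]
        exact markov

theorem stmt_7 (mbar : ℝ) (hmbar : 0 < mbar)
    (L m : ℕ → ℕ) (hLpos : ∀ n, 0 < L n) (hmpos : ∀ n, 0 < m n)
    (hL : Tendsto (fun n => L n) atTop atTop)
    (hm : Tendsto (fun n => (m n : ℝ) / (L n : ℝ)) atTop (nhds mbar))
    (Ω : ℕ → Type*) [∀ n, MeasureSpace (Ω n)]
    [∀ n, IsProbabilityMeasure (ℙ : Measure (Ω n))]
    (X : (n : ℕ) → Fin (m n) → Ω n → ℝ)
    (hmeas : ∀ n i, Measurable (X n i))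
    (hindep : ∀ n, iIndepFun (X n) ℙ)
    (hlaw : ∀ n i, Measure.map (X n i) ℙ =
      Measure.map (fun y : Fin (L n) → ℝ => (∑ l, y l) / (L n : ℝ))
        (Measure.pi fun _ => expMeasure 1))
    (ε : ℝ) (hε : ε ∈ Set.Ioo (0 : ℝ) 1) :
    Tendsto (fun n => ℙ {ω : Ω n | ∃ i, X n i ω ≤ 1 - ε}) atTop (nhds 0) := by
  obtain ⟨hε0, hε1⟩ := hε
  set r : ℝ := (1 - ε) * Real.exp ε with hr_def
  have hr0 : 0 ≤ r := mul_nonneg (by linarith) (Real.exp_pos _).le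
  have hr1 : r < 1 := by
    have h := Real.add_one_lt_exp (x := -ε) (by linarith)
    have h2 : (1 - ε) * Real.exp ε < Real.exp (-ε) * Real.exp ε :=
      mul_lt_mul_of_pos_right (by linarith) (Real.exp_pos _)
    rwa [← Real.exp_add, neg_add_cancel, Real.exp_zero] at h2
  have hbound : ∀ n, ℙ {ω : Ω n | ∃ i, X n i ω ≤ 1 - ε}
      ≤ ENNReal.ofReal ((m n : ℝ) * r ^ (L n)) := by
    intro n
    have hset : {ω : Ω n | ∃ i, X n i ω ≤ 1 - ε}
        = ⋃ i, (X n i) ⁻¹' Set.Iic (1 - ε) := by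
      ext ω; simp [Set.mem_iUnion, Set.mem_preimage]
    have hterm : ∀ i, ℙ ((X n i) ⁻¹' Set.Iic (1 - ε)) ≤ ENNReal.ofReal (r ^ (L n)) := by
      intro i
      have hg : Measurable (fun y : Fin (L n) → ℝ => (∑ l, y l) / (L n : ℝ)) :=
        (Finset.measurable_sum _ fun l _ => measurable_pi_apply l).div_const _
      rw [← Measure.map_apply (hmeas n i) measurableSet_Iic, hlaw n i,
        Measure.map_apply hg measurableSet_Iic]
      exact my_chernoff ε hε0 hε1 (L n) (hLpos n)
    calc ℙ {ω : Ω n | ∃ i, X n i ω ≤ 1 - ε}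
        ≤ ∑ i : Fin (m n), ℙ ((X n i) ⁻¹' Set.Iic (1 - ε)) := by
          rw [hset]
          exact measure_iUnion_fintype_le _ _
      _ ≤ ∑ _i : Fin (m n), ENNReal.ofReal (r ^ (L n)) :=
          Finset.sum_le_sum fun i _ => hterm i
      _ = (m n : ℝ≥0∞) * ENNReal.ofReal (r ^ (L n)) := by
          simp [Finset.sum_const, nsmul_eq_mul]
      _ = ENNReal.ofReal ((m n : ℝ) * r ^ (L n)) := by
          rw [ENNReal.ofReal_mul (Nat.cast_nonneg _), ENNReal.ofReal_natCast]
  have hlim : Tendsto (fun n => (m n : ℝ) * r ^ (L n)) atTop (nhds 0) := by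
    have h1 : Tendsto (fun n => ((L n : ℝ)) * r ^ (L n)) atTop (nhds 0) :=
      (tendsto_self_mul_const_pow_of_abs_lt_one (by rwa [abs_of_nonneg hr0])).comp hL
    have heq : ∀ n, (m n : ℝ) * r ^ (L n)
        = ((m n : ℝ) / (L n : ℝ)) * ((L n : ℝ) * r ^ (L n)) := by
      intro n
      have hLne : (L n : ℝ) ≠ 0 := Nat.cast_ne_zero.mpr (hLpos n).ne'
      field_simp
    simp_rw [heq]
    simpa using hm.mul h1
  have hofreal : Tendsto (fun n => ENNReal.ofReal ((m n : ℝ) * r ^ (L n))) atTop (nhds 0) := by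
    have := (ENNReal.continuous_ofReal.tendsto 0).comp hlim
    simpa only [ENNReal.ofReal_zero, Function.comp_def] using this
  exact tendsto_of_tendsto_of_tendsto_of_le_of_le tendsto_const_nhds hofreal
    (fun n => zero_le) hbound
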